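/- For m ≥ 3 and n ≥ 1, the number of random walk labelings of the (m,n)-tadpole graph is L(T_{m,n}) = 2^{m-2}\left(\binom{m+n}{n+1} + \sum_{k=0}^{n-1}\binom{m+n-1}{k+m}\right). -/

import Mathlib

open Finset

/-- A sequence of `k` distinct vertices of `G` such that every vertex other than the
first is adjacent to some earlier vertex (a random walk labeling disrupted after the
`k`-th vertex). -/
def IsRWLPrefix {V : Type*} (G : SimpleGraph V) {k : ℕ} (v : Fin k → V) : Prop :=
  Function.Injective v ∧ ∀ i : Fin k, i.val ≠ 0 → ∃ j : Fin k, j < i ∧ G.Adj (v j) (v i)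

/-- `L_k(G)`: the number of random walk labelings of `G` disrupted after the `k`-th
vertex.  For `k = 0` this equals `1` (the empty sequence). -/
noncomputable def rwlPrefixCount {V : Type*} (G : SimpleGraph V) (k : ℕ) : ℕ :=
  Nat.card {v : Fin k → V // IsRWLPrefix G v}

/-- `L(G)`: the number of random walk labelings of `G`, i.e. orderings of all the
vertices of `G` in which every vertex other than the first is adjacent to some
earlier vertex. -/
noncomputable def rwlCount {V : Type*} (G : SimpleGraph V) [Fintype V] : ℕ :=
  rwlPrefixCount G (Fintype.card V)

/-- The graph obtained from the disjoint union of `G` and `H` by joining the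
vertex `a` of `G` to the vertex `b` of `H` by an edge (a bridge). -/
def bridgeJoin {V W : Type*} (G : SimpleGraph V) (H : SimpleGraph W) (a : V) (b : W) :
    SimpleGraph (V ⊕ W) :=
  SimpleGraph.fromRel (fun x y =>
    match x, y with
    | Sum.inl u, Sum.inl v => G.Adj u v
    | Sum.inr u, Sum.inr v => H.Adj u v
    | Sum.inl u, Sum.inr v => u = a ∧ v = b
    | Sum.inr _, Sum.inl _ => False)






noncomputable def posCount {V : Type*} (G : SimpleGraph V) (N : ℕ) (u : V) (i : Fin N) : ℕ :=
  Nat.card {v : Fin N → V // IsRWLPrefix G v ∧ v i = u}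

lemma nat_card_sigma {ι : Type*} [Fintype ι] (f : ι → Type*) [∀ i, Finite (f i)] :
    Nat.card (Σ i, f i) = ∑ i, Nat.card (f i) := by
  classical
  letI := fun i => Fintype.ofFinite (f i)
  simp [Nat.card_eq_fintype_card]

lemma posCount_iso {V W : Type*} {G : SimpleGraph V} {H : SimpleGraph W} (e : G ≃g H)
    (N : ℕ) (u : V) (i : Fin N) : posCount G N u i = posCount H N (e u) i := by
  apply Nat.card_congr
  refine ⟨fun v => ⟨fun k => e (v.1 k), ?_, ?_⟩, fun v => ⟨fun k => e.symm (v.1 k), ?_, ?_⟩, ?_, ?_⟩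
  · obtain ⟨⟨hinj, hadj⟩, hu⟩ := v.2
    refine ⟨fun a b hab => hinj (e.injective hab), fun k hk => ?_⟩
    obtain ⟨j, hj, hadj'⟩ := hadj k hk
    exact ⟨j, hj, e.map_adj_iff.mpr hadj'⟩
  · simp [v.2.2]
  · obtain ⟨⟨hinj, hadj⟩, hu⟩ := v.2
    refine ⟨fun a b hab => hinj (e.symm.injective hab), fun k hk => ?_⟩
    obtain ⟨j, hj, hadj'⟩ := hadj k hk
    exact ⟨j, hj, e.symm.map_adj_iff.mpr hadj'⟩
  · simp [v.2.2]
  · intro v; ext k; simp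
  · intro v; ext k; simp

lemma rwlPrefixCount_eq_sum {V : Type*} [Fintype V] (G : SimpleGraph V) (N : ℕ) (i : Fin N) :
    rwlPrefixCount G N = ∑ u : V, posCount G N u i := by
  classical
  simp only [posCount]
  rw [rwlPrefixCount, ← nat_card_sigma (fun u : V => {v : Fin N → V // IsRWLPrefix G v ∧ v i = u})]
  apply Nat.card_congr
  exact ⟨fun v => ⟨v.1 i, v.1, v.2, rfl⟩, fun s => ⟨s.2.1, s.2.2.1⟩,
    fun v => rfl, fun s => by obtain ⟨u, v, hv, rfl⟩ := s; rfl⟩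

lemma rwlCount_eq_sum_pos {V : Type*} [Fintype V] (G : SimpleGraph V) (u : V) :
    rwlCount G = ∑ i : Fin (Fintype.card V), posCount G (Fintype.card V) u i := by
  classical
  simp only [posCount]
  rw [rwlCount, rwlPrefixCount,
    ← nat_card_sigma (fun i : Fin (Fintype.card V) =>
      {v : Fin (Fintype.card V) → V // IsRWLPrefix G v ∧ v i = u})]
  apply Nat.card_congr
  have hbij : ∀ v : {v : Fin (Fintype.card V) → V // IsRWLPrefix G v},
      Function.Bijective v.1 := by
    intro v
    rw [Fintype.bijective_iff_injective_and_card]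
    exact ⟨v.2.1, by simp⟩
  refine ⟨fun v => ⟨(Equiv.ofBijective v.1 (hbij v)).symm u, v.1, v.2, ?_⟩,
    fun s => ⟨s.2.1, s.2.2.1⟩, fun v => rfl, fun s => ?_⟩
  · show v.1 _ = u
    exact Equiv.apply_symm_apply (Equiv.ofBijective v.1 (hbij v)) u
  · obtain ⟨i, v, hv, hu⟩ := s
    have hi : (Equiv.ofBijective v (hbij ⟨v, hv⟩)).symm u = i := by
      rw [Equiv.symm_apply_eq]; exact hu.symm
    exact Sigma.ext hi (by subst hi; rfl)


def bSeq (m : ℕ) : ℕ → ℕ → ℕ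
  | 0, k => if k < m then 1 else 0
  | n+1, k => (∑ j ∈ range k, bSeq m n j) + if k = 0 then bSeq m n 0 else 0

def eSeq : ℕ → ℕ → ℕ := fun n k =>
  if k = 0 then 1 else ∑ t ∈ range (n-1), Nat.choose (k-1) t

lemma hs1 (n : ℕ) : ∀ k, ∑ j ∈ range k, Nat.choose j n = Nat.choose k (n+1) := by
  intro k
  induction k with
  | zero => simp
  | succ k ih => rw [sum_range_succ, ih, Nat.choose_succ_succ (k) (n)]; ring

lemma hs2 (n m : ℕ) (hn : 1 ≤ n) :
    ∀ k, ∑ j ∈ range k, Nat.choose (j - m) n = Nat.choose (k - m) (n+1) := by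
  intro k
  induction k with
  | zero => simp [Nat.choose_eq_zero_of_lt]
  | succ k ih =>
    rw [sum_range_succ, ih]
    rcases Nat.lt_or_ge k m with h | h
    · have h1 : k - m = 0 := by omega
      have h2 : k + 1 - m = 0 := by omega
      rw [h1, h2]
      simp [Nat.choose_eq_zero_of_lt, hn, Nat.lt_of_lt_of_le Nat.zero_lt_one hn]
    · have h2 : k + 1 - m = (k - m) + 1 := by omega
      rw [h2, Nat.choose_succ_succ (k - m) n]; ring

lemma sum_eSeq (n : ℕ) (hn : 1 ≤ n) (k : ℕ) :
    ∑ j ∈ range k, eSeq n j = if k = 0 then 0 else ∑ t ∈ range n, Nat.choose (k-1) t := by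
  rcases Nat.eq_zero_or_pos k with rfl | hk
  · simp
  obtain ⟨k', rfl⟩ : ∃ k', k = k' + 1 := ⟨k - 1, by omega⟩
  simp only [Nat.add_eq_zero, Nat.succ_ne_zero, and_false, if_false]
  rw [Finset.sum_range_succ']
  have h0 : eSeq n 0 = 1 := by simp [eSeq]
  have h1 : ∀ j, eSeq n (j + 1) = ∑ t ∈ range (n-1), Nat.choose j t := by
    intro j; simp [eSeq]
  simp only [h0, h1]
  rw [Finset.sum_comm]
  have h2 : ∀ t, ∑ j ∈ range k', Nat.choose j t = Nat.choose k' (t+1) := fun t => hs1 t k'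
  simp only [h2]
  obtain ⟨n', rfl⟩ : ∃ n', n = n' + 1 := ⟨n - 1, by omega⟩
  rw [Finset.sum_range_succ' (fun t => Nat.choose (k' + 1 - 1) t) n']
  simp

lemma bSeq_zero (m : ℕ) (hm : 1 ≤ m) : ∀ n, bSeq m n 0 = 1
  | 0 => by simp [bSeq]; omega
  | n+1 => by simp [bSeq, bSeq_zero m hm n]

lemma bSeq_closed (m : ℕ) (hm : 1 ≤ m) (n : ℕ) (hn : 1 ≤ n) (k : ℕ) :
    bSeq m n k + Nat.choose (k - m) n = Nat.choose k n + eSeq n k := by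
  induction n generalizing k with
  | zero => omega
  | succ n ih =>
    rcases Nat.eq_zero_or_pos n with rfl | hn'
    · -- n = 1 case
      have hsum : ∑ j ∈ range k, bSeq m 0 j = min k m := by
        induction k with
        | zero => simp
        | succ k ihk =>
          rw [sum_range_succ, ihk]
          by_cases h : k < m <;> simp [bSeq, h] <;> omega
      have hb : bSeq m 1 k = (∑ j ∈ range k, bSeq m 0 j) + if k = 0 then 1 else 0 := by
        simp only [bSeq]; congr 1; by_cases hk : k = 0 <;> simp [hk] <;> omega
      rw [hb, hsum]
      have he : eSeq 1 k = if k = 0 then 1 else 0 := by simp [eSeq]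
      rw [he, Nat.choose_one_right, Nat.choose_one_right]
      omega
    · -- step
      have hb : bSeq m (n+1) k = (∑ j ∈ range k, bSeq m n j) + if k = 0 then bSeq m n 0 else 0 := by
        simp [bSeq]
      have hb0 : bSeq m n 0 = 1 := bSeq_zero m hm n
      have hsums : (∑ j ∈ range k, bSeq m n j) + (∑ j ∈ range k, Nat.choose (j - m) n)
          = (∑ j ∈ range k, Nat.choose j n) + ∑ j ∈ range k, eSeq n j := by
        rw [← Finset.sum_add_distrib, ← Finset.sum_add_distrib]
        exact Finset.sum_congr rfl fun j _ => ih hn' j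
      rw [hs2 n m hn' k, hs1 n k, sum_eSeq n hn' k] at hsums
      have he : eSeq (n+1) k = if k = 0 then 1 else ∑ t ∈ range n, Nat.choose (k-1) t := by
        simp [eSeq]
      rw [hb, hb0, he]
      by_cases hk : k = 0
      · subst hk; simp at hsums ⊢
      · simp only [hk, if_false] at hsums ⊢; omega

lemma bSeq_sum (m n : ℕ) (hm : 1 ≤ m) (hn : 1 ≤ n) :
    ∑ k ∈ range (m + n), bSeq m n k
      = Nat.choose (m+n) (n+1) + ∑ t ∈ range n, Nat.choose (m+n-1) t := by
  have h1 : (∑ k ∈ range (m+n), bSeq m n k) + ∑ k ∈ range (m+n), Nat.choose (k - m) n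
      = (∑ k ∈ range (m+n), Nat.choose k n) + ∑ k ∈ range (m+n), eSeq n k := by
    rw [← Finset.sum_add_distrib, ← Finset.sum_add_distrib]
    exact Finset.sum_congr rfl fun k _ => bSeq_closed m hm n hn k
  rw [hs2 n m hn, hs1 n, sum_eSeq n hn] at h1
  have h2 : m + n - m = n := by omega
  have h3 : Nat.choose n (n+1) = 0 := Nat.choose_eq_zero_of_lt (by omega)
  have h4 : m + n ≠ 0 := by omega
  rw [h2, h3] at h1
  simp only [h4, if_false] at h1
  omega

lemma target_reindex (m n : ℕ) (hn : 1 ≤ n) :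
    ∑ k ∈ range n, Nat.choose (m+n-1) (k+m) = ∑ t ∈ range n, Nat.choose (m+n-1) t := by
  rw [← Finset.sum_range_reflect]
  apply Finset.sum_congr rfl
  intro k hk
  simp only [Finset.mem_range] at hk
  have h1 : n - 1 - k + m = (m + n - 1) - k := by omega
  rw [h1, Nat.choose_symm (by omega)]





lemma card_partition {α ι : Type*} [Finite α] [Fintype ι] (P : α → Prop) (f : ι → α → Prop)
    (h : ∀ a, P a → ∃! i, f i a) :
    Nat.card {a : α // P a} = ∑ i : ι, Nat.card {a : α // P a ∧ f i a} := by
  classical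
  rw [← nat_card_sigma]
  apply Nat.card_congr
  refine ⟨fun a => ⟨(h a.1 a.2).exists.choose, a.1, a.2, (h a.1 a.2).exists.choose_spec⟩,
    fun s => ⟨s.2.1, s.2.2.1⟩, fun a => rfl, fun s => ?_⟩
  obtain ⟨i, a, pa, fia⟩ := s
  have hi : (h a pa).exists.choose = i := (h a pa).unique (h a pa).exists.choose_spec fia
  exact Sigma.ext hi (by subst hi; rfl)

section Pendant

variable {V : Type*} {G : SimpleGraph V} {w u : V}

/-- The graph `G` with the vertex `w` deleted. -/
def Gd (G : SimpleGraph V) (w : V) : SimpleGraph {x : V // x ≠ w} :=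
  G.comap Subtype.val

lemma succAbove_val {N : ℕ} (i : Fin (N+1)) (k : Fin N) :
    ((i.succAbove k : Fin (N+1)) : ℕ) = if (k:ℕ) < (i:ℕ) then (k:ℕ) else (k:ℕ)+1 := by
  rw [Fin.succAbove]
  split <;> rename_i h <;> rw [Fin.lt_def] at h
  · rw [Fin.coe_castSucc, if_pos (by simpa using h)]
  · rw [Fin.val_succ, if_neg (by simpa using h)]

lemma avoid {N : ℕ} (hw : ∀ x, G.Adj w x ↔ x = u) {v : Fin (N+1) → V}
    (hinj : Function.Injective v) {i t t₀ : Fin (N+1)}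
    (hvi : v i = w) (hu : v t₀ = u) (hkey : t ≠ t₀ ∨ t₀ < i)
    (hex : ∃ s, s < t ∧ G.Adj (v s) (v t)) :
    ∃ s, s < t ∧ s ≠ i ∧ G.Adj (v s) (v t) := by
  obtain ⟨s, hs, ha⟩ := hex
  refine ⟨s, hs, ?_, ha⟩
  rintro rfl
  rw [hvi] at ha
  have h1 : v t = u := (hw (v t)).mp ha
  have ht0 : t = t₀ := hinj (h1.trans hu.symm)
  rcases hkey with h | h
  · exact h ht0
  · rw [ht0] at hs; exact absurd hs (asymm h)

lemma rwl_removeNth {N : ℕ} (hw : ∀ x, G.Adj w x ↔ x = u) {v : Fin (N+1) → V}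
    (hv : IsRWLPrefix G v) {i t₀ : Fin (N+1)} (hvi : v i = w) (hu : v t₀ = u)
    (hkey : ∀ k : Fin N, (k:ℕ) ≠ 0 → (i.succAbove k ≠ t₀ ∨ t₀ < i))
    (hne0 : ∀ k : Fin N, (k:ℕ) ≠ 0 → ((i.succAbove k : Fin (N+1)) : ℕ) ≠ 0) :
    IsRWLPrefix (Gd G w)
      (fun k => (⟨v (i.succAbove k),
        fun h => (Fin.succAbove_ne i k) (hv.1 (h.trans hvi.symm))⟩ : {x : V // x ≠ w})) := by
  constructor
  · intro a b hab
    have h1 : v (i.succAbove a) = v (i.succAbove b) := congrArg Subtype.val hab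
    exact Fin.succAbove_right_injective (hv.1 h1)
  · intro k hk
    obtain ⟨s, hs, hsi, ha⟩ := avoid hw hv.1 hvi hu (hkey k hk) (hv.2 _ (hne0 k hk))
    obtain ⟨k', rfl⟩ := Fin.exists_succAbove_eq hsi
    exact ⟨k', Fin.succAbove_lt_succAbove_iff.mp hs, ha⟩

lemma rwl_insertNth {N : ℕ} (hw : ∀ x, G.Adj w x ↔ x = u)
    {v' : Fin N → {x : V // x ≠ w}}
    (hv' : IsRWLPrefix (Gd G w) v') {i : Fin (N+1)} {j : Fin N}
    (hj : ((v' j : V)) = u)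
    (hcase : ((i.succAbove j : Fin (N+1)) : ℕ) < (i:ℕ) ∨ ((i:ℕ) = 0 ∧ (j:ℕ) = 0)) :
    IsRWLPrefix G (i.insertNth w (fun k => (v' k : V))) := by
  set g : Fin N → V := fun k => (v' k : V) with hg
  have hginj : Function.Injective g := by
    intro a b hab
    exact hv'.1 (Subtype.ext hab)
  have hgnew : ∀ k, g k ≠ w := fun k => (v' k).2
  constructor
  · intro a b hab
    by_cases hai : a = i <;> by_cases hbi : b = i
    · rw [hai, hbi]
    · exfalso
      obtain ⟨k, hk⟩ := Fin.exists_succAbove_eq hbi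
      rw [hai, Fin.insertNth_apply_same, ← hk, Fin.insertNth_apply_succAbove] at hab
      exact hgnew k hab.symm
    · exfalso
      obtain ⟨k, hk⟩ := Fin.exists_succAbove_eq hai
      rw [hbi, Fin.insertNth_apply_same, ← hk, Fin.insertNth_apply_succAbove] at hab
      exact hgnew k hab
    · obtain ⟨k, hk⟩ := Fin.exists_succAbove_eq hai
      obtain ⟨k', hk'⟩ := Fin.exists_succAbove_eq hbi
      rw [← hk, ← hk', Fin.insertNth_apply_succAbove, Fin.insertNth_apply_succAbove] at hab
      rw [← hk, ← hk', hginj hab]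
  · intro t ht0
    rcases eq_or_ne t i with hti | hti
    · rcases hcase with h | ⟨h0, _⟩
      · refine ⟨i.succAbove j, ?_, ?_⟩
        · rw [hti]; exact Fin.lt_def.mpr h
        · rw [hti, Fin.insertNth_apply_succAbove, Fin.insertNth_apply_same]
          exact ((hw (g j)).mpr hj).symm
      · rw [hti] at ht0; exact absurd h0 ht0
    · obtain ⟨k, hk⟩ := Fin.exists_succAbove_eq hti
      rcases eq_or_ne (k:ℕ) 0 with hk0 | hk0
      · have hvalk := succAbove_val i k
        have hvalj := succAbove_val i j
        have hi0 : (i:ℕ) = 0 := by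
          by_contra hi0
          rw [← hk, hvalk, if_pos (by omega)] at ht0
          exact ht0 hk0
        rcases hcase with h | ⟨-, hj0⟩
        · rw [hvalj] at h; omega
        · have hkj : k = j := Fin.ext (by omega)
          refine ⟨i, ?_, ?_⟩
          · rw [← hk]; exact Fin.lt_def.mpr (by rw [hvalk]; omega)
          · rw [← hk, Fin.insertNth_apply_same, Fin.insertNth_apply_succAbove, hkj]
            exact (hw (g j)).mpr hj
      · obtain ⟨k', hk', ha⟩ := hv'.2 k hk0
        refine ⟨i.succAbove k', ?_, ?_⟩
        · rw [← hk]; exact Fin.succAbove_lt_succAbove_iff.mpr hk'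
        · rw [← hk, Fin.insertNth_apply_succAbove, Fin.insertNth_apply_succAbove]
          exact ha

end Pendant

section PendantCount
variable {V : Type*} [Finite V] {G : SimpleGraph V} {w u : V}

lemma pendant_pos_pos (hw : ∀ x, G.Adj w x ↔ x = u) (hu_ne : u ≠ w)
    {N : ℕ} (i : Fin (N+1)) (hi : (i:ℕ) ≠ 0) :
    posCount G (N+1) w i
      = ∑ j : Fin N, if (j:ℕ) < (i:ℕ) then posCount (Gd G w) N ⟨u, hu_ne⟩ j else 0 := by
  classical
  rw [posCount, card_partition (fun v => IsRWLPrefix G v ∧ v i = w)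
      (fun (j : Fin N) (v : Fin (N+1) → V) => v (i.succAbove j) = u)]
  · apply Finset.sum_congr rfl
    intro j _
    by_cases hj : (j:ℕ) < (i:ℕ)
    · rw [if_pos hj]
      have hsa : ((i.succAbove j : Fin (N+1)) : ℕ) = (j:ℕ) := by
        rw [succAbove_val, if_pos hj]
      have hsalt : ((i.succAbove j : Fin (N+1)) : ℕ) < (i:ℕ) := by rw [hsa]; exact hj
      apply Nat.card_congr
      refine ⟨fun v => ⟨fun k => (⟨v.1 (i.succAbove k),
          fun h => (Fin.succAbove_ne i k) (v.2.1.1.1 (h.trans v.2.1.2.symm))⟩ : {x : V // x ≠ w}),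
          ?_, ?_⟩,
        fun v' => ⟨i.insertNth w (fun k => (v'.1 k : V)), ⟨?_, ?_⟩, ?_⟩,
        ?_, ?_⟩
      · exact rwl_removeNth hw v.2.1.1 v.2.1.2 v.2.2
          (fun k _ => Or.inr (Fin.lt_def.mpr hsalt))
          (fun k hk => by rw [succAbove_val]; split <;> omega)
      · exact Subtype.ext v.2.2
      · exact rwl_insertNth hw v'.2.1 (congrArg Subtype.val v'.2.2) (Or.inl hsalt)
      · exact Fin.insertNth_apply_same (α := fun _ => V) i w _
      · rw [Fin.insertNth_apply_succAbove]
        exact congrArg Subtype.val v'.2.2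
      · intro v
        apply Subtype.ext
        show i.insertNth w (i.removeNth v.1) = v.1
        rw [Fin.insertNth_removeNth]
        exact Function.update_eq_self_iff.mpr v.2.1.2.symm
      · intro v'
        apply Subtype.ext
        funext k
        apply Subtype.ext
        exact Fin.insertNth_apply_succAbove (α := fun _ => V) i w (fun k => (v'.1 k : V)) k
    · rw [if_neg hj]
      have : IsEmpty {v : Fin (N+1) → V //
          (IsRWLPrefix G v ∧ v i = w) ∧ v (i.succAbove j) = u} := by
        constructor
        rintro ⟨v, ⟨⟨hinj, hadj⟩, hvi⟩, hvj⟩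
        obtain ⟨s, hs, ha⟩ := hadj i hi
        rw [hvi] at ha
        have hsu : v s = u := (hw (v s)).mp ha.symm
        have : s = i.succAbove j := hinj (hsu.trans hvj.symm)
        have h1 : ((i.succAbove j : Fin (N+1)) : ℕ) = (j:ℕ)+1 := by
          rw [succAbove_val, if_neg hj]
        rw [Fin.lt_def, this, h1] at hs
        omega
      exact Nat.card_of_isEmpty
  · rintro v ⟨hv, hvi⟩
    obtain ⟨s, hs, ha⟩ := hv.2 i hi
    rw [hvi] at ha
    have hsu : v s = u := (hw (v s)).mp ha.symm
    have hsi : s ≠ i := by rintro rfl; exact absurd hs (lt_irrefl _)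
    obtain ⟨j₀, rfl⟩ := Fin.exists_succAbove_eq hsi
    exact ⟨j₀, hsu, fun j' hj' => Fin.succAbove_right_injective (hv.1 (hj'.trans hsu.symm))⟩

lemma pendant_pos_zero (hw : ∀ x, G.Adj w x ↔ x = u) (hu_ne : u ≠ w)
    {N : ℕ} (hN : 0 < N) (i : Fin (N+1)) (hi : (i:ℕ) = 0) :
    posCount G (N+1) w i = posCount (Gd G w) N ⟨u, hu_ne⟩ ⟨0, hN⟩ := by
  classical
  have hi0 : i = 0 := Fin.ext hi
  subst hi0
  have hone : ((0 : Fin (N+1)).succAbove ⟨0, hN⟩ : Fin (N+1)) = ⟨1, by omega⟩ := by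
    apply Fin.ext
    rw [succAbove_val]
    simp
  apply Nat.card_congr
  have key : ∀ v : {v : Fin (N+1) → V // IsRWLPrefix G v ∧ v 0 = w},
      v.1 ((0 : Fin (N+1)).succAbove ⟨0, hN⟩) = u := by
    rintro ⟨v, ⟨hinj, hadj⟩, hv0⟩
    obtain ⟨s, hs, ha⟩ := hadj ⟨1, by omega⟩ (by simp)
    have hs0 : s = 0 := by
      apply Fin.ext
      have := Fin.lt_def.mp hs
      simp at this ⊢
      omega
    rw [hs0, hv0] at ha
    rw [hone]
    exact (hw _).mp ha
  refine ⟨fun v => ⟨fun k => (⟨v.1 ((0 : Fin (N+1)).succAbove k),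
      fun h => (Fin.succAbove_ne 0 k) (v.2.1.1 (h.trans v.2.2.symm))⟩ : {x : V // x ≠ w}),
      ?_, ?_⟩,
    fun v' => ⟨(0 : Fin (N+1)).insertNth w (fun k => (v'.1 k : V)),
      ?_, ?_⟩,
    ?_, ?_⟩
  · refine rwl_removeNth hw v.2.1 v.2.2 (key v) (fun k hk => ?_) (fun k hk => ?_)
    · left
      intro hcon
      have h1 : ((0 : Fin (N+1)).succAbove k : Fin (N+1)) = (0 : Fin (N+1)).succAbove ⟨0, hN⟩ := by
        rw [hcon]
      have := Fin.succAbove_right_injective h1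
      rw [Fin.ext_iff] at this
      simp at this
      omega
    · rw [succAbove_val]
      split <;> omega
  · apply Subtype.ext
    exact key v
  · exact rwl_insertNth hw v'.2.1 (congrArg Subtype.val v'.2.2) (Or.inr ⟨rfl, rfl⟩)
  · exact Fin.insertNth_apply_same (α := fun _ => V) 0 w _
  · intro v
    apply Subtype.ext
    show (0:Fin (N+1)).insertNth w ((0:Fin (N+1)).removeNth v.1) = v.1
    rw [Fin.insertNth_removeNth]
    exact Function.update_eq_self_iff.mpr v.2.2.symm
  · intro v'
    apply Subtype.ext
    funext k
    apply Subtype.ext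
    exact Fin.insertNth_apply_succAbove (α := fun _ => V) 0 w (fun k => (v'.1 k : V)) k

end PendantCount



section Cycle
variable {M : ℕ}
open Fin.CommRing

lemma finCast_inj {a b : ℕ} (ha : a < M+3) (hb : b < M+3) :
    ((a : Fin (M+3)) = (b : Fin (M+3))) ↔ a = b := by
  rw [Fin.ext_iff, Fin.val_natCast, Fin.val_natCast, Nat.mod_eq_of_lt ha, Nat.mod_eq_of_lt hb]

lemma sub_eq_add_iff' {c : Fin (M+3)} {a b : ℕ} :
    (c - (a : Fin (M+3)) = c + (b : Fin (M+3))) ↔ (((a + b : ℕ) : Fin (M+3)) = 0) := by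
  rw [Nat.cast_add, sub_eq_iff_eq_add]
  constructor
  · intro h
    have h2 : c + 0 = c + ((b:Fin (M+3)) + a) := by rw [add_zero, ← add_assoc]; exact h
    have h3 := add_left_cancel h2
    rw [add_comm (a : Fin (M+3)) (b : Fin (M+3))]
    exact h3.symm
  · intro h
    have : (a : Fin (M+3)) + b = 0 := h
    rw [add_assoc, add_comm (b : Fin (M+3)), this, add_zero]

lemma not_sub_eq_add {c : Fin (M+3)} {a b : ℕ} (h1 : 0 < a + b) (h2 : a + b < M+3) :
    c - (a : Fin (M+3)) ≠ c + (b : Fin (M+3)) := by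
  intro h
  rw [sub_eq_add_iff'] at h
  rw [Fin.ext_iff, Fin.val_natCast, Nat.mod_eq_of_lt h2] at h
  simp at h
  omega

def lcc (w : Fin (M+1) → Bool) (t : ℕ) : ℕ :=
  ∑ s ∈ range t, (if h : s < M+1 then (if w ⟨s, h⟩ then 1 else 0) else 0)

def bitAt (w : Fin (M+1) → Bool) (p : ℕ) : Bool :=
  if h : p - 1 < M+1 then w ⟨p-1, h⟩ else false

lemma lcc_zero (w : Fin (M+1) → Bool) : lcc w 0 = 0 := by simp [lcc]

lemma lcc_succ (w : Fin (M+1) → Bool) (t : ℕ) :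
    lcc w (t+1) = lcc w t + (if bitAt w (t+1) then 1 else 0) := by
  rw [lcc, lcc, sum_range_succ, bitAt]
  congr 1
  simp only [Nat.add_sub_cancel]
  split <;> simp

lemma lcc_le (w : Fin (M+1) → Bool) (t : ℕ) : lcc w t ≤ t := by
  induction t with
  | zero => simp [lcc_zero]
  | succ t ih => rw [lcc_succ]; split <;> omega

lemma lcc_mono (w : Fin (M+1) → Bool) {s t : ℕ} (h : s ≤ t) : lcc w s ≤ lcc w t := by
  obtain ⟨d, rfl⟩ := Nat.exists_eq_add_of_le h
  induction d with
  | zero => simp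
  | succ d ih => rw [← Nat.add_assoc, lcc_succ]; split <;> omega

lemma lcc_add_le (w : Fin (M+1) → Bool) (s d : ℕ) : lcc w (s + d) ≤ lcc w s + d := by
  induction d with
  | zero => simp
  | succ d ih => rw [← Nat.add_assoc, lcc_succ]; split <;> omega

lemma lcc_le_M (w : Fin (M+1) → Bool) (t : ℕ) : lcc w t ≤ M+1 := by
  rcases le_or_gt t (M+1) with h | h
  · exact le_trans (lcc_le w t) h
  · obtain ⟨d, rfl⟩ := Nat.exists_eq_add_of_le (le_of_lt h)
    have : ∀ d', lcc w (M+1+d') = lcc w (M+1) := by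
      intro d'
      induction d' with
      | zero => rfl
      | succ d' ih =>
        rw [← Nat.add_assoc, lcc_succ, ih]
        have hb : bitAt w (M+1+d'+1) = false := by
          rw [bitAt]
          have : ¬ (M+1+d'+1-1 < M+1) := by omega
          rw [dif_neg this]
        rw [hb]
        simp
    rw [this d]
    exact lcc_le w (M+1)

def Dv (c : Fin (M+3)) (w : Fin (M+1) → Bool) : Fin (M+3) → Fin (M+3) := fun t =>
  if t.val = 0 then c
  else if bitAt w t.val then c - ((lcc w t.val : ℕ) : Fin (M+3))
  else c + (((t.val - lcc w t.val) : ℕ) : Fin (M+3))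

lemma Dv_zero (c : Fin (M+3)) (w : Fin (M+1) → Bool) {t : Fin (M+3)} (h : t.val = 0) :
    Dv c w t = c := by rw [Dv]; exact if_pos h

lemma Dv_minus (c : Fin (M+3)) (w : Fin (M+1) → Bool) {t : Fin (M+3)} (h : t.val ≠ 0)
    (hb : bitAt w t.val = true) :
    Dv c w t = c - ((lcc w t.val : ℕ) : Fin (M+3)) := by
  rw [Dv]; rw [if_neg h, if_pos hb]

lemma Dv_plus (c : Fin (M+3)) (w : Fin (M+1) → Bool) {t : Fin (M+3)} (h : t.val ≠ 0)
    (hb : bitAt w t.val = false) :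
    Dv c w t = c + (((t.val - lcc w t.val) : ℕ) : Fin (M+3)) := by
  rw [Dv]; rw [if_neg h, hb]; simp

lemma exists_minus (c : Fin (M+3)) (w : Fin (M+1) → Bool) :
    ∀ t, t ≤ M+2 → ∀ a, a ≤ lcc w t →
      ∃ j : Fin (M+3), j.val ≤ t ∧ Dv c w j = c - ((a : ℕ) : Fin (M+3)) := by
  intro t
  induction t with
  | zero =>
    intro _ a ha
    rw [lcc_zero] at ha
    interval_cases a
    exact ⟨⟨0, by omega⟩, le_refl _, by rw [Dv_zero c w rfl]; simp⟩
  | succ t ih =>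
    intro ht a ha
    rw [lcc_succ] at ha
    by_cases hb : bitAt w (t+1) = true
    · rw [if_pos hb] at ha
      rcases Nat.lt_or_ge a (lcc w t + 1) with h | h
      · obtain ⟨j, hj, he⟩ := ih (by omega) a (by omega)
        exact ⟨j, by omega, he⟩
      · have haa : a = lcc w t + 1 := by omega
        refine ⟨⟨t+1, by omega⟩, le_refl _, ?_⟩
        rw [Dv_minus c w (by simp) (by exact hb)]
        have : lcc w (t+1) = a := by rw [lcc_succ, if_pos hb]; omega
        rw [this]
    · rw [if_neg hb] at ha
      obtain ⟨j, hj, he⟩ := ih (by omega) a (by omega)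
      exact ⟨j, by omega, he⟩

lemma exists_plus (c : Fin (M+3)) (w : Fin (M+1) → Bool) :
    ∀ t, t ≤ M+2 → ∀ b, b ≤ t - lcc w t →
      ∃ j : Fin (M+3), j.val ≤ t ∧ Dv c w j = c + ((b : ℕ) : Fin (M+3)) := by
  intro t
  induction t with
  | zero =>
    intro _ b hb
    have : b = 0 := by omega
    subst this
    exact ⟨⟨0, by omega⟩, le_refl _, by rw [Dv_zero c w rfl]; simp⟩
  | succ t ih =>
    intro ht b hbb
    by_cases hb : bitAt w (t+1) = true
    · have hl : lcc w (t+1) = lcc w t + 1 := by rw [lcc_succ, if_pos hb]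
      have hle := lcc_le w t
      obtain ⟨j, hj, he⟩ := ih (by omega) b (by omega)
      exact ⟨j, by omega, he⟩
    · have hl : lcc w (t+1) = lcc w t := by rw [lcc_succ, if_neg hb]; omega
      rcases Nat.lt_or_ge b (t + 1 - lcc w (t+1)) with h | h
      · obtain ⟨j, hj, he⟩ := ih (by omega) b (by omega)
        exact ⟨j, by omega, he⟩
      · have hbb2 : b = t + 1 - lcc w (t+1) := by omega
        refine ⟨⟨t+1, by omega⟩, le_refl _, ?_⟩
        rw [Dv_plus c w (by simp) (by simpa using hb)]
        rw [← hbb2]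


section Cycle2
open SimpleGraph
variable {M : ℕ}

lemma bit_lcc {w : Fin (M+1) → Bool} {p : ℕ} (hp : p ≠ 0) (hb : bitAt w p = true) :
    lcc w p = lcc w (p-1) + 1 := by
  obtain ⟨q, rfl⟩ : ∃ q, p = q + 1 := ⟨p - 1, by omega⟩
  rw [lcc_succ, if_pos hb]
  simp

lemma nobit_lcc {w : Fin (M+1) → Bool} {p : ℕ} (hp : p ≠ 0) (hb : bitAt w p = false) :
    lcc w p = lcc w (p-1) := by
  obtain ⟨q, rfl⟩ : ∃ q, p = q + 1 := ⟨p - 1, by omega⟩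
  rw [lcc_succ, hb]
  simp

lemma minus_pos {w : Fin (M+1) → Bool} {p : ℕ} (hp : p ≠ 0) (hb : bitAt w p = true) :
    1 ≤ lcc w p := by rw [bit_lcc hp hb]; omega

lemma plus_pos {w : Fin (M+1) → Bool} {p : ℕ} (hp : p ≠ 0) (hb : bitAt w p = false) :
    1 ≤ p - lcc w p := by
  have h1 := nobit_lcc hp hb
  have h2 := lcc_le w (p-1)
  omega

lemma Dv_inj (c : Fin (M+3)) (w : Fin (M+1) → Bool) : Function.Injective (Dv c w) := by
  have key : ∀ s t : Fin (M+3), s.val < t.val → Dv c w s ≠ Dv c w t := by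
    intro s t hst h
    have ht0 : t.val ≠ 0 := by omega
    have htM : t.val ≤ M+2 := by omega
    have hsM : s.val ≤ M+2 := by omega
    -- plus-form for s when s = 0 or bit false
    have hplus_s : s.val = 0 ∨ bitAt w s.val = false →
        Dv c w s = c + (((s.val - lcc w s.val) : ℕ) : Fin (M+3)) := by
      rintro (h0 | hbf)
      · rw [Dv_zero c w h0, h0, lcc_zero]; simp
      · rcases eq_or_ne s.val 0 with h0 | h0
        · rw [Dv_zero c w h0, h0, lcc_zero]; simp
        · exact Dv_plus c w h0 hbf
    have hsr : s.val = 0 ∨ bitAt w s.val = false → s.val - lcc w s.val < t.val - lcc w t.val ∨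
        bitAt w t.val = true := by
      intro hs
      rcases hbt : bitAt w t.val with hf | htr
      · left
        have h1 := nobit_lcc ht0 hbt
        have h2 := lcc_le w s.val
        have h3 : lcc w (t.val - 1) ≤ lcc w s.val + (t.val - 1 - s.val) := by
          have := lcc_add_le w s.val (t.val - 1 - s.val)
          have he : s.val + (t.val - 1 - s.val) = t.val - 1 := by omega
          rw [he] at this
          exact this
        omega
      · right; rfl
    rcases hbt : bitAt w t.val with _ | _
    · -- t is plus
      have hDt : Dv c w t = c + (((t.val - lcc w t.val) : ℕ) : Fin (M+3)) :=
        Dv_plus c w ht0 hbt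
      rcases hbs : bitAt w s.val with _ | _
      · -- s plus (or zero)
        have hDs := hplus_s (Or.inr hbs)
        rw [hDs, hDt] at h
        have hcast := add_left_cancel h
        have h1 : s.val - lcc w s.val = t.val - lcc w t.val := by
          rw [finCast_inj (by omega) (by omega)] at hcast
          exact hcast
        have := hsr (Or.inr hbs)
        rcases this with h2 | h2
        · omega
        · rw [h2] at hbt; exact absurd hbt (by simp)
      · -- s minus, t plus : only if s ≠ 0
        rcases eq_or_ne s.val 0 with h0 | h0
        · have hDs := hplus_s (Or.inl h0)
          rw [hDs, hDt] at h
          have hcast := add_left_cancel h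
          rw [finCast_inj (by omega) (by omega)] at hcast
          have h2 := plus_pos ht0 hbt
          omega
        · have hDs := Dv_minus c w h0 hbs
          rw [hDs, hDt] at h
          have hlcc := lcc_mono w (le_of_lt hst)
          have h1 := minus_pos h0 hbs
          have h2 := lcc_le w t.val
          exact not_sub_eq_add (by omega) (by omega) h
    · -- t is minus
      have hlt := bit_lcc ht0 hbt
      have hDt : Dv c w t = c - ((lcc w t.val : ℕ) : Fin (M+3)) := Dv_minus c w ht0 hbt
      rcases hbs : bitAt w s.val with _ | _
      · have hDs := hplus_s (Or.inr hbs)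
        rw [hDs, hDt] at h
        have h3 : lcc w t.val + (s.val - lcc w s.val) ≤ t.val := by
          have h4 : lcc w t.val ≤ lcc w s.val + (t.val - s.val) := by
            have := lcc_add_le w s.val (t.val - s.val)
            have he : s.val + (t.val - s.val) = t.val := by omega
            rw [he] at this
            exact this
          have := lcc_le w s.val
          omega
        exact not_sub_eq_add (by have := minus_pos ht0 hbt; omega) (by omega) h.symm
      · rcases eq_or_ne s.val 0 with h0 | h0
        · have hDs := hplus_s (Or.inl h0)
          rw [hDs, hDt] at h
          have h1 := minus_pos ht0 hbt
          have h2 := lcc_le_M w t.val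
          exact not_sub_eq_add (by omega) (by omega) h.symm
        · have hDs := Dv_minus c w h0 hbs
          rw [hDs, hDt] at h
          have hcast := sub_right_inj.mp h
          rw [finCast_inj (by have := lcc_le_M w s.val; omega) (by have := lcc_le_M w t.val; omega)]
            at hcast
          have h1 : lcc w s.val ≤ lcc w (t.val - 1) := lcc_mono w (by omega)
          omega
  intro s t h
  rcases lt_trichotomy s.val t.val with hh | hh | hh
  · exact absurd h (key s t hh)
  · exact Fin.ext hh
  · exact absurd h.symm (key t s hh)

lemma Dv_rwl (c : Fin (M+3)) (w : Fin (M+1) → Bool) :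
    IsRWLPrefix (SimpleGraph.cycleGraph (M+3)) (Dv c w) := by
  refine ⟨Dv_inj c w, ?_⟩
  intro t ht0
  have htM : t.val ≤ M+2 := by omega
  rcases hbt : bitAt w t.val with _ | _
  · -- plus step
    have h1 := nobit_lcc ht0 hbt
    have h2 := plus_pos ht0 hbt
    obtain ⟨j, hj, he⟩ := exists_plus c w (t.val - 1) (by omega)
      (t.val - lcc w t.val - 1) (by have := lcc_le w (t.val - 1); omega)
    refine ⟨j, Fin.lt_def.mpr (by omega), ?_⟩
    rw [he, Dv_plus c w ht0 hbt]
    rw [SimpleGraph.cycleGraph_adj]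
    right
    have hval : t.val - lcc w t.val = (t.val - lcc w t.val - 1) + 1 := by omega
    rw [hval]
    push_cast
    ring
  · -- minus step
    have h1 := bit_lcc ht0 hbt
    obtain ⟨j, hj, he⟩ := exists_minus c w (t.val - 1) (by omega)
      (lcc w (t.val - 1)) (le_refl _)
    refine ⟨j, Fin.lt_def.mpr (by omega), ?_⟩
    rw [he, Dv_minus c w ht0 hbt]
    rw [SimpleGraph.cycleGraph_adj]
    left
    rw [h1]
    push_cast
    ring

end Cycle2

section Cycle3
open SimpleGraph
variable {M : ℕ}

lemma lcc_congr {w w' : Fin (M+1) → Bool} {p : ℕ} (h : ∀ i : Fin (M+1), i.val < p → w i = w' i) :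
    lcc w p = lcc w' p := by
  unfold lcc
  apply Finset.sum_congr rfl
  intro s hs
  rw [Finset.mem_range] at hs
  by_cases hsM : s < M+1
  · rw [dif_pos hsM, dif_pos hsM, h ⟨s, hsM⟩ hs]
  · rw [dif_neg hsM, dif_neg hsM]

lemma Dv_congr (c : Fin (M+3)) {w w' : Fin (M+1) → Bool} {p : ℕ}
    (h : ∀ i : Fin (M+1), i.val < p → w i = w' i)
    {s : Fin (M+3)} (hs : s.val ≤ p) : Dv c w s = Dv c w' s := by
  rcases eq_or_ne s.val 0 with h0 | h0
  · rw [Dv_zero c w h0, Dv_zero c w' h0]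
  · have hbit : bitAt w s.val = bitAt w' s.val := by
      rw [bitAt, bitAt]
      by_cases hsM : s.val - 1 < M+1
      · rw [dif_pos hsM, dif_pos hsM, h ⟨s.val - 1, hsM⟩ (by show s.val - 1 < p; omega)]
      · rw [dif_neg hsM, dif_neg hsM]
    have hl : lcc w s.val = lcc w' s.val :=
      lcc_congr (fun i hi => h i (by omega))
    simp only [Dv]
    rw [hbit, hl]

lemma Dv_mem (c : Fin (M+3)) (w : Fin (M+1) → Bool) {t : ℕ} (ht : t ≤ M+2)
    {j : Fin (M+3)} (hj : j.val ≤ t) :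
    (∃ a, a ≤ lcc w t ∧ Dv c w j = c - ((a:ℕ) : Fin (M+3))) ∨
    (∃ b, b ≤ t - lcc w t ∧ Dv c w j = c + ((b:ℕ) : Fin (M+3))) := by
  rcases eq_or_ne j.val 0 with h0 | h0
  · right; exact ⟨0, by omega, by rw [Dv_zero c w h0]; simp⟩
  rcases hb : bitAt w j.val with _ | _
  · right
    refine ⟨j.val - lcc w j.val, ?_, Dv_plus c w h0 hb⟩
    have h1 := lcc_add_le w j.val (t - j.val)
    have h2 : j.val + (t - j.val) = t := by omega
    rw [h2] at h1
    have := lcc_le w j.val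
    omega
  · left
    exact ⟨lcc w j.val, lcc_mono w hj, Dv_minus c w h0 hb⟩

lemma Dv_surj (c : Fin (M+3)) {v : Fin (M+3) → Fin (M+3)}
    (hv : IsRWLPrefix (SimpleGraph.cycleGraph (M+3)) v) (h0 : v ⟨0, by omega⟩ = c) :
    ∃ w, ∀ s, Dv c w s = v s := by
  suffices h : ∀ T, T ≤ M+2 → ∃ w, ∀ s : Fin (M+3), s.val ≤ T → Dv c w s = v s by
    obtain ⟨w, hw⟩ := h (M+2) (le_refl _)
    exact ⟨w, fun s => hw s (by omega)⟩
  intro T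
  induction T with
  | zero =>
    intro _
    refine ⟨fun _ => false, fun s hs => ?_⟩
    have hs0 : s = ⟨0, by omega⟩ := Fin.ext (by show s.val = 0; omega)
    rw [hs0, Dv_zero c _ rfl, h0]
  | succ T ih =>
    intro hT
    obtain ⟨w, hw⟩ := ih (by omega)
    set t : Fin (M+3) := ⟨T+1, by omega⟩ with htdef
    have htval : t.val = T+1 := rfl
    have hnotminus : ∀ a, a ≤ lcc w T → v t ≠ c - ((a:ℕ) : Fin (M+3)) := by
      intro a ha hcon
      obtain ⟨j, hj, he⟩ := exists_minus c w T (by omega) a ha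
      rw [hw j (by omega)] at he
      have hteq : t = j := hv.1 (hcon.trans he.symm)
      have := congrArg Fin.val hteq
      rw [htval] at this
      omega
    have hnotplus : ∀ b, b ≤ T - lcc w T → v t ≠ c + ((b:ℕ) : Fin (M+3)) := by
      intro b hb hcon
      obtain ⟨j, hj, he⟩ := exists_plus c w T (by omega) b hb
      rw [hw j (by omega)] at he
      have hteq : t = j := hv.1 (hcon.trans he.symm)
      have := congrArg Fin.val hteq
      rw [htval] at this
      omega
    obtain ⟨j, hjt, hadj⟩ := hv.2 t (by rw [htval]; omega)
    have hjT : j.val ≤ T := by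
      have := Fin.lt_def.mp hjt
      rw [htval] at this
      omega
    rw [SimpleGraph.cycleGraph_adj] at hadj
    have hstep : v t = v j + 1 ∨ v t = v j - 1 := by
      rcases hadj with h | h
      · right
        have h2 : v j = 1 + v t := sub_eq_iff_eq_add.mp h
        rw [h2]; ring
      · left
        have h2 : v t = 1 + v j := sub_eq_iff_eq_add.mp h
        rw [h2]; ring
    have hmem := Dv_mem c w (t := T) (by omega) hjT
    rw [hw j hjT] at hmem
    have hlT := lcc_le w T
    have hlM := lcc_le_M w T
    set l := lcc w T with hldef
    set r := T - lcc w T with hrdef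
    have hkey : v t = c - ((l+1 : ℕ) : Fin (M+3)) ∨ v t = c + ((r+1 : ℕ) : Fin (M+3)) := by
      rcases hmem with ⟨a, ha, hva⟩ | ⟨b, hb, hvb⟩
      · rcases hstep with hs | hs
        · rcases eq_or_ne a 0 with rfl | ha0
          · rcases eq_or_ne r 0 with hr0 | hr0
            · right
              rw [hs, hva, hr0]
              push_cast
              ring
            · exfalso
              apply hnotplus 1 (by omega)
              rw [hs, hva]
              push_cast
              ring
          · exfalso
            obtain ⟨a', rfl⟩ : ∃ a', a = a' + 1 := ⟨a-1, by omega⟩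
            apply hnotminus a' (by omega)
            rw [hs, hva]
            push_cast
            ring
        · by_cases hL : a + 1 ≤ l
          · exfalso
            apply hnotminus (a+1) hL
            rw [hs, hva]
            push_cast
            ring
          · left
            have haa : a = l := by omega
            rw [hs, hva, haa]
            push_cast
            ring
      · rcases hstep with hs | hs
        · by_cases hR : b + 1 ≤ r
          · exfalso
            apply hnotplus (b+1) hR
            rw [hs, hvb]
            push_cast
            ring
          · right
            have hbb : b = r := by omega
            rw [hs, hvb, hbb]
            push_cast
            ring
        · rcases eq_or_ne b 0 with rfl | hb0
          · rcases eq_or_ne l 0 with hl0 | hl0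
            · left
              rw [hs, hvb, hl0]
              push_cast
              ring
            · exfalso
              apply hnotminus 1 (by omega)
              rw [hs, hvb]
              push_cast
              ring
          · exfalso
            obtain ⟨b', rfl⟩ : ∃ b', b = b' + 1 := ⟨b-1, by omega⟩
            apply hnotplus b' (by omega)
            rw [hs, hvb]
            push_cast
            ring
    rcases le_or_gt (T+1) (M+1) with hTsmall | hTbig
    · have hTlt : T < M+1 := by omega
      rcases hkey with hk | hk
      · refine ⟨Function.update w ⟨T, hTlt⟩ true, fun s hs => ?_⟩
        have hagree : ∀ i : Fin (M+1), i.val < T → w i = Function.update w ⟨T, hTlt⟩ true i := by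
          intro i hi
          rw [Function.update_of_ne (by exact Fin.ne_of_val_ne (by show i.val ≠ T; omega)) _ w]
        rcases le_or_gt s.val T with hsT | hsT
        · rw [← Dv_congr c hagree hsT]
          exact hw s hsT
        · have hst : s = t := Fin.ext (by rw [htval]; omega)
          rw [hst]
          have hbit : bitAt (Function.update w ⟨T, hTlt⟩ true) (T+1) = true := by
            rw [bitAt, dif_pos (by omega : T+1-1 < M+1)]
            have : (⟨T+1-1, by omega⟩ : Fin (M+1)) = ⟨T, hTlt⟩ := Fin.ext (by show T+1-1 = T; omega)
            rw [this, Function.update_self]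
          have hlcc : lcc (Function.update w ⟨T, hTlt⟩ true) (T+1) = l + 1 := by
            rw [bit_lcc (by omega) hbit]
            simp only [Nat.add_sub_cancel]
            rw [← lcc_congr (fun i hi => hagree i hi)]
          rw [Dv_minus c _ (by rw [htval]; omega) (by rw [htval]; exact hbit)]
          rw [htval, hlcc, hk]
      · refine ⟨Function.update w ⟨T, hTlt⟩ false, fun s hs => ?_⟩
        have hagree : ∀ i : Fin (M+1), i.val < T → w i = Function.update w ⟨T, hTlt⟩ false i := by
          intro i hi
          rw [Function.update_of_ne (by exact Fin.ne_of_val_ne (by show i.val ≠ T; omega)) _ w]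
        rcases le_or_gt s.val T with hsT | hsT
        · rw [← Dv_congr c hagree hsT]
          exact hw s hsT
        · have hst : s = t := Fin.ext (by rw [htval]; omega)
          rw [hst]
          have hbit : bitAt (Function.update w ⟨T, hTlt⟩ false) (T+1) = false := by
            rw [bitAt, dif_pos (by omega : T+1-1 < M+1)]
            have : (⟨T+1-1, by omega⟩ : Fin (M+1)) = ⟨T, hTlt⟩ := Fin.ext (by show T+1-1 = T; omega)
            rw [this, Function.update_self]
          have hlcc : lcc (Function.update w ⟨T, hTlt⟩ false) (T+1) = l := by
            rw [nobit_lcc (by omega) hbit]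
            simp only [Nat.add_sub_cancel]
            rw [← lcc_congr (fun i hi => hagree i hi)]
          rw [Dv_plus c _ (by rw [htval]; omega) (by rw [htval]; exact hbit)]
          rw [htval, hlcc, hk]
          congr 2
          omega
    · have hTeq : T = M+1 := by omega
      refine ⟨w, fun s hs => ?_⟩
      rcases le_or_gt s.val T with hsT | hsT
      · exact hw s hsT
      · have hst : s = t := Fin.ext (by rw [htval]; omega)
        rw [hst]
        have hbit : bitAt w (T+1) = false := by
          rw [bitAt, dif_neg (by omega)]
        have hlcc : lcc w (T+1) = l := by
          rw [nobit_lcc (by omega) hbit]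
          simp only [Nat.add_sub_cancel]
          rfl
        rw [Dv_plus c _ (by rw [htval]; omega) (by rw [htval]; exact hbit)]
        rw [htval, hlcc]
        rcases hkey with hk | hk
        · rw [hk]
          have heq : c - ((l+1 : ℕ) : Fin (M+3)) = c + ((T+1-l : ℕ) : Fin (M+3)) := by
            rw [sub_eq_add_iff']
            have h5 : l + 1 + (T + 1 - l) = M + 3 := by omega
            rw [h5]
            exact Fin.natCast_self (M+3)
          exact heq.symm
        · rw [hk]
          congr 2
          omega
end Cycle3

section Cycle4
open SimpleGraph
variable {M : ℕ}

lemma cycle_start_count (c : Fin (M+3)) :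
    Nat.card {v : Fin (M+3) → Fin (M+3) //
      IsRWLPrefix (cycleGraph (M+3)) v ∧ v ⟨0, by omega⟩ = c} = 2^(M+1) := by
  classical
  have hcard : Nat.card (Fin (M+1) → Bool) = 2^(M+1) := by
    simp [Nat.card_eq_fintype_card]
  rw [← hcard]
  symm
  apply Nat.card_congr
  have hbij : Function.Bijective (fun w : Fin (M+1) → Bool =>
      (⟨Dv c w, Dv_rwl c w, Dv_zero c w rfl⟩ :
        {v : Fin (M+3) → Fin (M+3) //
          IsRWLPrefix (cycleGraph (M+3)) v ∧ v ⟨0, by omega⟩ = c})) := by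
    constructor
    · intro w w' h
      have hD : Dv c w = Dv c w' := congrArg Subtype.val h
      by_contra hne
      have hex : ∃ p, ∃ hp : p < M+1, w ⟨p, hp⟩ ≠ w' ⟨p, hp⟩ := by
        by_contra hall
        push_neg at hall
        apply hne
        funext i
        exact hall i.val i.isLt
      set p₀ := Nat.find hex with hp₀def
      obtain ⟨hp₀, hne₀⟩ := Nat.find_spec hex
      have hagree : ∀ i : Fin (M+1), i.val < p₀ → w i = w' i := by
        intro i hi
        have h3 := Nat.find_min hex hi
        push_neg at h3
        have h4 := h3 i.isLt
        simpa using h4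
      set pp : Fin (M+3) := ⟨p₀+1, by omega⟩ with hppdef
      have hppval : pp.val = p₀ + 1 := rfl
      have hl : lcc w p₀ = lcc w' p₀ := lcc_congr hagree
      have hbw : bitAt w (p₀+1) = w ⟨p₀, hp₀⟩ := by
        rw [bitAt, dif_pos (by omega : p₀+1-1 < M+1)]
        congr 1
      have hbw' : bitAt w' (p₀+1) = w' ⟨p₀, hp₀⟩ := by
        rw [bitAt, dif_pos (by omega : p₀+1-1 < M+1)]
        congr 1
      have hDp : Dv c w pp = Dv c w' pp := by rw [hD]
      have hlle := lcc_le w p₀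
      have hlM := lcc_le_M w p₀
      rcases hw1 : w ⟨p₀, hp₀⟩ with _ | _
      · rcases hw2 : w' ⟨p₀, hp₀⟩ with _ | _
        · rw [hw1, hw2] at hne₀; exact hne₀ rfl
        · -- w false, w' true
          rw [Dv_plus c w (by rw [hppval]; omega) (by rw [hppval, hbw]; exact hw1),
              Dv_minus c w' (by rw [hppval]; omega) (by rw [hppval, hbw']; exact hw2)] at hDp
          rw [hppval] at hDp
          have hl1 : lcc w (p₀+1) = lcc w p₀ := by
            rw [nobit_lcc (by omega) (by rw [hbw]; exact hw1)]
            simp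
          have hl2 : lcc w' (p₀+1) = lcc w p₀ + 1 := by
            rw [bit_lcc (by omega) (by rw [hbw']; exact hw2)]
            simp [← hl]
          rw [hl1, hl2] at hDp
          exact not_sub_eq_add (by omega) (by omega) hDp.symm
      · rcases hw2 : w' ⟨p₀, hp₀⟩ with _ | _
        · -- w true, w' false
          rw [Dv_minus c w (by rw [hppval]; omega) (by rw [hppval, hbw]; exact hw1),
              Dv_plus c w' (by rw [hppval]; omega) (by rw [hppval, hbw']; exact hw2)] at hDp
          rw [hppval] at hDp
          have hl1 : lcc w (p₀+1) = lcc w p₀ + 1 := by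
            rw [bit_lcc (by omega) (by rw [hbw]; exact hw1)]
            simp
          have hl2 : lcc w' (p₀+1) = lcc w p₀ := by
            rw [nobit_lcc (by omega) (by rw [hbw']; exact hw2)]
            simp [← hl]
          rw [hl1, hl2] at hDp
          exact not_sub_eq_add (by omega) (by omega) hDp
        · rw [hw1, hw2] at hne₀; exact hne₀ rfl
    · rintro ⟨v, hv, hv0⟩
      obtain ⟨w, hw⟩ := Dv_surj c hv hv0
      exact ⟨w, Subtype.ext (funext hw)⟩
  exact Equiv.ofBijective _ hbij

def rotIso (r : Fin (M+3)) : cycleGraph (M+3) ≃g cycleGraph (M+3) where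
  toEquiv := Equiv.addRight r
  map_rel_iff' := by
    intro a b
    simp only [Equiv.coe_addRight]
    rw [cycleGraph_adj, cycleGraph_adj, add_sub_add_right_eq_sub, add_sub_add_right_eq_sub]

lemma cycle_posCount (c : Fin (M+3)) (i : Fin (M+3)) :
    posCount (cycleGraph (M+3)) (M+3) c i = 2^(M+1) := by
  classical
  have hstart : ∀ c' : Fin (M+3), posCount (cycleGraph (M+3)) (M+3) c' ⟨0, by omega⟩ = 2^(M+1) :=
    fun c' => cycle_start_count c'
  have hrot : ∀ c' : Fin (M+3), posCount (cycleGraph (M+3)) (M+3) c i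
      = posCount (cycleGraph (M+3)) (M+3) c' i := by
    intro c'
    have := posCount_iso (rotIso (c' - c)) (M+3) c i
    have he : (rotIso (c' - c)) c = c' := by
      show c + (c' - c) = c'
      ring
    rw [he] at this
    exact this
  have hcardV : Fintype.card (Fin (M+3)) = M+3 := by simp
  have h1 : rwlPrefixCount (cycleGraph (M+3)) (M+3) = ∑ c' : Fin (M+3),
      posCount (cycleGraph (M+3)) (M+3) c' i := rwlPrefixCount_eq_sum _ _ i
  have h2 : rwlPrefixCount (cycleGraph (M+3)) (M+3) = ∑ c' : Fin (M+3),
      posCount (cycleGraph (M+3)) (M+3) c' ⟨0, by omega⟩ := rwlPrefixCount_eq_sum _ _ _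
  rw [Finset.sum_congr rfl (fun c' _ => hstart c')] at h2
  rw [Finset.sum_congr rfl (fun c' _ => (hrot c').symm)] at h1
  simp only [Finset.sum_const, Finset.card_univ, hcardV, smul_eq_mul] at h1 h2
  have := h1.symm.trans h2
  exact Nat.eq_of_mul_eq_mul_left (by omega) this

end Cycle4

end Cycle

section Tadpole
open SimpleGraph


variable {V W : Type*} {G : SimpleGraph V} {H : SimpleGraph W} {a : V} {b : W}

lemma bridgeJoin_inl_inl {u v : V} :
    (bridgeJoin G H a b).Adj (Sum.inl u) (Sum.inl v) ↔ G.Adj u v := by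
  rw [bridgeJoin, SimpleGraph.fromRel_adj]
  constructor
  · rintro ⟨hne, h | h⟩
    · exact h
    · exact h.symm
  · intro h
    exact ⟨by simp [h.ne], Or.inl h⟩

lemma bridgeJoin_inr_inr {u v : W} :
    (bridgeJoin G H a b).Adj (Sum.inr u) (Sum.inr v) ↔ H.Adj u v := by
  rw [bridgeJoin, SimpleGraph.fromRel_adj]
  constructor
  · rintro ⟨hne, h | h⟩
    · exact h
    · exact h.symm
  · intro h
    exact ⟨by simp [h.ne], Or.inl h⟩

lemma bridgeJoin_inl_inr {u : V} {p : W} :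
    (bridgeJoin G H a b).Adj (Sum.inl u) (Sum.inr p) ↔ u = a ∧ p = b := by
  rw [bridgeJoin, SimpleGraph.fromRel_adj]
  constructor
  · rintro ⟨hne, h | h⟩
    · exact h
    · exact h.elim
  · intro h
    exact ⟨by simp, Or.inl h⟩

lemma bridgeJoin_inr_inl {u : V} {p : W} :
    (bridgeJoin G H a b).Adj (Sum.inr p) (Sum.inl u) ↔ u = a ∧ p = b := by
  constructor
  · intro h
    exact bridgeJoin_inl_inr.mp h.symm
  · intro h
    exact (bridgeJoin_inl_inr.mpr h).symm

end Tadpole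

section TadpoleMain
open SimpleGraph

variable {M : ℕ}

/-- The tadpole graph. -/
def TG (M n : ℕ) (hn : 1 ≤ n) : SimpleGraph (Fin (M+3) ⊕ Fin n) :=
  bridgeJoin (cycleGraph (M+3)) (pathGraph n) ⟨0, by omega⟩ ⟨0, hn⟩

/-- Unique neighbor of the pendant vertex, case n = 1. -/
lemma TG_pendant_one :
    ∀ x, (TG M 1 (le_refl 1)).Adj (Sum.inr ⟨0, by omega⟩) x ↔ x = Sum.inl ⟨0, by omega⟩ := by
  intro x
  rcases x with u | p
  · rw [TG, bridgeJoin_inr_inl]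
    constructor
    · rintro ⟨h1, h2⟩
      rw [h1]
    · intro h
      rw [Sum.inl.injEq] at h
      exact ⟨h, rfl⟩
  · rw [TG, bridgeJoin_inr_inr]
    constructor
    · intro h
      rw [pathGraph_adj] at h
      omega
    · intro h
      exact absurd h (by simp)

/-- Unique neighbor of the pendant vertex, case n ≥ 2. -/
lemma TG_pendant_ge (n : ℕ) (hn : 2 ≤ n) :
    ∀ x, (TG M n (by omega)).Adj (Sum.inr ⟨n-1, by omega⟩) x
      ↔ x = Sum.inr (⟨n-2, by omega⟩ : Fin n) := by
  intro x
  rcases x with u | p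
  · rw [TG, bridgeJoin_inr_inl]
    constructor
    · rintro ⟨h1, h2⟩
      rw [Fin.ext_iff] at h2
      simp at h2
      omega
    · intro h
      exact absurd h (by simp)
  · rw [TG, bridgeJoin_inr_inr, pathGraph_adj]
    constructor
    · intro h
      simp only [Sum.inr.injEq, Fin.ext_iff]
      simp only [] at h
      have hp := p.isLt
      omega
    · intro h
      rw [Sum.inr.injEq, Fin.ext_iff] at h
      simp only []
      right
      simp at h ⊢
      omega

/-- Pruning the pendant vertex of `TG M 1` gives the cycle graph. -/
def pruneOne (M : ℕ) :
    Gd (TG M 1 (le_refl 1)) (Sum.inr ⟨0, by omega⟩) ≃g cycleGraph (M+3) where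
  toEquiv :=
    { toFun := fun x => match x with
        | ⟨Sum.inl a, _⟩ => a
        | ⟨Sum.inr b, h⟩ => absurd (by
            have : b = ⟨0, by omega⟩ := Subsingleton.elim _ _
            rw [this]) h
      invFun := fun a => ⟨Sum.inl a, by simp⟩
      left_inv := by
        rintro ⟨x, hx⟩
        rcases x with u | p
        · rfl
        · exact absurd (by
            have : p = ⟨0, by omega⟩ := Subsingleton.elim _ _
            rw [this]) hx
      right_inv := fun a => rfl }
  map_rel_iff' := by
    rintro ⟨x, hx⟩ ⟨y, hy⟩
    rcases x with u | p
    · rcases y with u' | p'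
      · show (cycleGraph (M+3)).Adj u u' ↔ (Gd _ _).Adj _ _
        rw [Gd, comap_adj]
        show _ ↔ (TG M 1 (le_refl 1)).Adj (Sum.inl u) (Sum.inl u')
        rw [TG, bridgeJoin_inl_inl]
      · exact absurd (by
          have : p' = ⟨0, by omega⟩ := Subsingleton.elim _ _
          rw [this]) hy
    · exact absurd (by
        have : p = ⟨0, by omega⟩ := Subsingleton.elim _ _
        rw [this]) hx

/-- Pruning the pendant vertex of `TG M (n+1)` gives `TG M n`, for `n ≥ 1`. -/
def pruneStep (M n : ℕ) (hn : 1 ≤ n) :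
    Gd (TG M (n+1) (by omega)) (Sum.inr ⟨n, by omega⟩) ≃g TG M n hn where
  toEquiv :=
    { toFun := fun x => match x with
        | ⟨Sum.inl a, _⟩ => Sum.inl a
        | ⟨Sum.inr b, h⟩ => Sum.inr ⟨b.val, by
            have hb : b ≠ ⟨n, by omega⟩ := fun hbe => h (by rw [hbe])
            have hlt := b.isLt
            rcases Nat.lt_or_ge b.val n with hh | hh
            · exact hh
            · exact absurd (Fin.ext (by show b.val = n; omega)) hb⟩
      invFun := fun y => match y with
        | Sum.inl a => ⟨Sum.inl a, by simp⟩
        | Sum.inr b => ⟨Sum.inr ⟨b.val, by have := b.isLt; omega⟩, by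
            intro h
            simp only [Sum.inr.injEq, Fin.mk.injEq] at h
            have := b.isLt
            omega⟩
      left_inv := by
        rintro ⟨x, hx⟩
        rcases x with u | p
        · rfl
        · exact Subtype.ext rfl
      right_inv := fun y => by
        rcases y with u | p
        · rfl
        · rfl }
  map_rel_iff' := by
    rintro ⟨x, hx⟩ ⟨y, hy⟩
    rcases x with u | p
    · rcases y with u' | p'
      · show (TG M n hn).Adj (Sum.inl u) (Sum.inl u') ↔ _
        rw [TG, bridgeJoin_inl_inl, Gd, comap_adj]
        show _ ↔ (TG M (n+1) _).Adj (Sum.inl u) (Sum.inl u')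
        rw [TG, bridgeJoin_inl_inl]
      · show (TG M n hn).Adj (Sum.inl u) (Sum.inr _) ↔ _
        rw [TG, bridgeJoin_inl_inr, Gd, comap_adj]
        show _ ↔ (TG M (n+1) _).Adj (Sum.inl u) (Sum.inr p')
        rw [TG, bridgeJoin_inl_inr]
        simp only [Fin.ext_iff, Fin.val_mk]
    · rcases y with u' | p'
      · show (TG M n hn).Adj (Sum.inr _) (Sum.inl u') ↔ _
        rw [TG, bridgeJoin_inr_inl, Gd, comap_adj]
        show _ ↔ (TG M (n+1) _).Adj (Sum.inr p) (Sum.inl u')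
        rw [TG, bridgeJoin_inr_inl]
        simp only [Fin.ext_iff, Fin.val_mk]
      · show (TG M n hn).Adj (Sum.inr _) (Sum.inr _) ↔ _
        rw [TG, bridgeJoin_inr_inr, Gd, comap_adj]
        show _ ↔ (TG M (n+1) _).Adj (Sum.inr p) (Sum.inr p')
        rw [TG, bridgeJoin_inr_inr, pathGraph_adj, pathGraph_adj]

end TadpoleMain

section Final
open SimpleGraph Finset

lemma rwlCount_eq_sum_pos' {V : Type*} [Fintype V] (G : SimpleGraph V) (u : V) {N : ℕ}
    (hN : Fintype.card V = N) :
    rwlCount G = ∑ i : Fin N, posCount G N u i := by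
  subst hN
  exact rwlCount_eq_sum_pos G u

lemma fin_sum_ite {K : ℕ} (f : ℕ → ℕ) (I : ℕ) (hI : I ≤ K) :
    ∑ j : Fin K, (if (j:ℕ) < I then f j.val else 0) = ∑ j ∈ Finset.range I, f j := by
  rw [Fin.sum_univ_eq_sum_range (fun j => if j < I then f j else 0) K]
  rw [← Finset.sum_subset (Finset.range_subset_range.mpr hI) (fun j hj hnj => by
    rw [Finset.mem_range] at hnj
    exact if_neg hnj)]
  apply Finset.sum_congr rfl
  intro j hj
  rw [Finset.mem_range] at hj
  exact if_pos hj

lemma TG_pendant_succ {M : ℕ} (n : ℕ) (hn : 1 ≤ n) :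
    ∀ x, (TG M (n+1) (by omega)).Adj (Sum.inr ⟨n, by omega⟩) x
      ↔ x = Sum.inr (⟨n-1, by omega⟩ : Fin (n+1)) := by
  intro x
  rcases x with u | p
  · rw [TG, bridgeJoin_inr_inl]
    constructor
    · rintro ⟨h1, h2⟩
      rw [Fin.ext_iff] at h2
      simp at h2
      omega
    · intro h
      exact absurd h (by simp)
  · rw [TG, bridgeJoin_inr_inr, pathGraph_adj]
    constructor
    · intro h
      simp only [Sum.inr.injEq, Fin.ext_iff]
      simp only [] at h
      have hp := p.isLt
      omega
    · intro h
      rw [Sum.inr.injEq, Fin.ext_iff] at h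
      simp only []
      right
      simp at h ⊢
      omega

lemma tadpole_posCount (M : ℕ) : ∀ n (hn : 1 ≤ n), ∀ i : Fin (M+3+n),
    posCount (TG M n hn) (M+3+n) (Sum.inr ⟨n-1, by omega⟩) i
      = 2^(M+1) * bSeq (M+3) n i.val := by
  intro n hn
  induction n, hn using Nat.le_induction with
  | base =>
    intro i
    have hune : (Sum.inl ⟨0, by omega⟩ : Fin (M+3) ⊕ Fin 1) ≠ Sum.inr ⟨0, by omega⟩ := by simp
    rcases eq_or_ne i.val 0 with hi | hi
    · refine Eq.trans (pendant_pos_zero TG_pendant_one hune (by omega) i hi) ?_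
      refine Eq.trans (posCount_iso (pruneOne M) _ _ _) ?_
      rw [cycle_posCount]
      rw [hi]
      simp [bSeq]
    · refine Eq.trans (pendant_pos_pos TG_pendant_one hune i hi) ?_
      have hval : ∀ j : Fin (M+3),
          posCount (Gd (TG M 1 (le_refl 1)) (Sum.inr ⟨0, by omega⟩)) (M+3)
            ⟨Sum.inl ⟨0, by omega⟩, hune⟩ j = 2^(M+1) * bSeq (M+3) 0 j.val := by
        intro j
        refine Eq.trans (posCount_iso (pruneOne M) _ _ _) ?_
        rw [cycle_posCount]
        have hb1 : bSeq (M+3) 0 j.val = 1 := by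
          have hj := j.isLt
          simp only [bSeq]
          rw [if_pos hj]
        rw [hb1, mul_one]
      rw [Finset.sum_congr rfl (fun j _ => by rw [hval j])]
      have hIle : i.val ≤ M+3 := by omega
      rw [fin_sum_ite (fun k => 2^(M+1) * bSeq (M+3) 0 k) i.val hIle]
      rw [← Finset.mul_sum]
      congr 1
      simp [bSeq, hi]
  | succ n hn ih =>
    intro i
    have hune : (Sum.inr ⟨n-1, by omega⟩ : Fin (M+3) ⊕ Fin (n+1)) ≠ Sum.inr ⟨n, by omega⟩ := by
      intro h
      rw [Sum.inr.injEq, Fin.mk.injEq] at h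
      omega
    have hw := TG_pendant_succ (M := M) n hn
    simp only [Nat.add_sub_cancel]
    have hiso : ∀ j : Fin (M+3+n),
        posCount (Gd (TG M (n+1) (by omega)) (Sum.inr ⟨n, by omega⟩)) (M+3+n)
          ⟨Sum.inr ⟨n-1, by omega⟩, hune⟩ j = 2^(M+1) * bSeq (M+3) n j.val := by
      intro j
      refine Eq.trans (posCount_iso (pruneStep M n hn) _ _ _) ?_
      have he : (pruneStep M n hn) ⟨Sum.inr ⟨n-1, by omega⟩, hune⟩
          = Sum.inr (⟨n-1, by omega⟩ : Fin n) := rfl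
      rw [he]
      exact ih j
    rcases eq_or_ne i.val 0 with hi | hi
    · refine Eq.trans (pendant_pos_zero hw hune (N := M+3+n) (by omega) i hi) ?_
      refine Eq.trans (hiso ⟨0, by omega⟩) ?_
      have h3 : bSeq (M+3) (n+1) i.val = bSeq (M+3) n 0 := by
        rw [hi]
        simp [bSeq]
      rw [h3]
    · refine Eq.trans (pendant_pos_pos hw hune i hi) ?_
      have hIle : i.val ≤ M+3+n := by have := i.isLt; omega
      have hsc : (∑ j : Fin (M+3+n), if (j:ℕ) < (i:ℕ) then
            posCount (Gd (TG M (n+1) (by omega)) (Sum.inr ⟨n, by omega⟩)) (M+3+n)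
              ⟨Sum.inr ⟨n-1, by omega⟩, hune⟩ j else 0)
          = ∑ j : Fin (M+3+n), if (j:ℕ) < (i:ℕ) then 2^(M+1) * bSeq (M+3) n j.val else 0 :=
        Finset.sum_congr rfl (fun j _ => by rw [hiso j])
      refine Eq.trans hsc ?_
      refine Eq.trans (fin_sum_ite (fun k => 2^(M+1) * bSeq (M+3) n k) i.val hIle) ?_
      rw [← Finset.mul_sum]
      congr 1
      simp [bSeq, hi]

end Final


theorem rwlCount_tadpole (m n : ℕ) (hm : 3 ≤ m) (hn : 1 ≤ n) :
    rwlCount (bridgeJoin (SimpleGraph.cycleGraph m) (SimpleGraph.pathGraph n)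
        ⟨0, by omega⟩ ⟨0, hn⟩) =
      2 ^ (m - 2) *
        (Nat.choose (m + n) (n + 1) +
          ∑ k ∈ Finset.range n, Nat.choose (m + n - 1) (k + m)) := by
  classical
  obtain ⟨M, rfl⟩ : ∃ M, m = M+3 := ⟨m-3, by omega⟩
  have hgraph : bridgeJoin (SimpleGraph.cycleGraph (M+3)) (SimpleGraph.pathGraph n)
      ⟨0, by omega⟩ ⟨0, hn⟩ = TG M n hn := rfl
  rw [hgraph]
  have hcard : Fintype.card (Fin (M+3) ⊕ Fin n) = M+3+n := by simp
  rw [rwlCount_eq_sum_pos' (TG M n hn) (Sum.inr ⟨n-1, by omega⟩ : Fin (M+3) ⊕ Fin n) hcard]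
  rw [Finset.sum_congr rfl (fun i _ => tadpole_posCount M n hn i)]
  rw [← Finset.mul_sum]
  rw [Fin.sum_univ_eq_sum_range (fun k => bSeq (M+3) n k) (M+3+n)]
  rw [bSeq_sum (M+3) n (by omega) hn]
  rw [target_reindex (M+3) n hn]
  have h2 : M + 3 - 2 = M + 1 := by omega
  rw [h2]
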